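/- The dihedral group of order 2n with n even does not admit a faithful 2-dimensional complex representation ρ such that the composite map to PGL(2,ℂ) is still injective with the same image order 2n lifting isomorphically; specifically, for n even, any subgroup of GL(2,ℂ) mapping isomorphically onto a dihedral subgroup of order 2n of PGL(2,ℂ) does not exist when 4 divides 2n and the dihedral group contains a Klein four-subgroup. -/

import Mathlib

/-- `PGL2` is `PGL(2,ℂ)`, the quotient of `GL(2,ℂ)` by its center (the scalar matrices). -/
abbrev PGL2 : Type :=
  Matrix.GeneralLinearGroup (Fin 2) ℂ ⧸ Subgroup.center (Matrix.GeneralLinearGroup (Fin 2) ℂ)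

/-- The projection `GL(2,ℂ) → PGL(2,ℂ)`. -/
abbrev projPGL2 : Matrix.GeneralLinearGroup (Fin 2) ℂ →* PGL2 :=
  QuotientGroup.mk' (Subgroup.center (Matrix.GeneralLinearGroup (Fin 2) ℂ))

/-- A non-scalar `2×2` involution has determinant `-1`. -/
lemma det_neg_one_of_sq_eq_one {M : Matrix (Fin 2) (Fin 2) ℂ}
    (h : M * M = 1) (hns : ∀ c : ℂ, M ≠ c • (1 : Matrix (Fin 2) (Fin 2) ℂ)) :
    M.det = -1 := by
  have h00 : (M * M) 0 0 = (1 : Matrix (Fin 2) (Fin 2) ℂ) 0 0 := by rw [h]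
  have h01 : (M * M) 0 1 = (1 : Matrix (Fin 2) (Fin 2) ℂ) 0 1 := by rw [h]
  have h10 : (M * M) 1 0 = (1 : Matrix (Fin 2) (Fin 2) ℂ) 1 0 := by rw [h]
  have h11 : (M * M) 1 1 = (1 : Matrix (Fin 2) (Fin 2) ℂ) 1 1 := by rw [h]
  simp [Matrix.mul_apply, Fin.sum_univ_two, Matrix.one_apply] at h00 h01 h10 h11
  by_cases hd : M 0 0 + M 1 1 = 0
  · rw [Matrix.det_fin_two]
    have : M 1 1 = -(M 0 0) := by linear_combination hd
    rw [this]
    linear_combination -h00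
  · exfalso
    have hb : M 0 1 = 0 := by
      rcases mul_eq_zero.mp (show M 0 1 * (M 0 0 + M 1 1) = 0 by ring_nf; linear_combination h01) with h | h
      · exact h
      · exact absurd h hd
    have hc : M 1 0 = 0 := by
      rcases mul_eq_zero.mp (show M 1 0 * (M 0 0 + M 1 1) = 0 by ring_nf; linear_combination h10) with h | h
      · exact h
      · exact absurd h hd
    have had : M 0 0 = M 1 1 := by
      have : (M 0 0 - M 1 1) * (M 0 0 + M 1 1) = 0 := by
        ring_nf
        linear_combination h00 - h11 + (M 1 0) * hb - (M 0 1) * hc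
      rcases mul_eq_zero.mp this with h | h
      · linear_combination h
      · exact absurd h hd
    apply hns (M 0 0)
    ext i j
    fin_cases i <;> fin_cases j <;>
      simp [Matrix.smul_apply, Matrix.one_apply, hb, hc, ← had]

/-- A non-central involution in `GL(2,ℂ)` has determinant `-1`. -/
lemma gl_det_neg_one {A : Matrix.GeneralLinearGroup (Fin 2) ℂ}
    (h : A * A = 1)
    (hc : A ∉ Subgroup.center (Matrix.GeneralLinearGroup (Fin 2) ℂ)) :
    (A : Matrix (Fin 2) (Fin 2) ℂ).det = -1 := by
  apply det_neg_one_of_sq_eq_one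
  · have := congrArg Units.val h
    simpa using this
  · intro c hMc
    apply hc
    rw [Subgroup.mem_center_iff]
    intro g
    apply Units.ext
    show (g : Matrix (Fin 2) (Fin 2) ℂ) * A = (A : Matrix (Fin 2) (Fin 2) ℂ) * g
    rw [hMc, smul_mul_assoc, one_mul, mul_smul_comm, mul_one]

/-- For `n` even (so that `4 ∣ 2n` and the dihedral group of order `2n` contains a Klein
four-subgroup), no dihedral subgroup of `PGL(2,ℂ)` of order `2n` lifts isomorphically to
`GL(2,ℂ)`: there is no group-homomorphism section of the projection over such a subgroup. -/
theorem even_dihedral_subgroup_of_PGL2_does_not_lift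
    (n : ℕ) (hn : Even n) (hn0 : n ≠ 0)
    (H : Subgroup PGL2) (hH : Nonempty (H ≃* DihedralGroup n)) :
    ¬ ∃ s : H →* Matrix.GeneralLinearGroup (Fin 2) ℂ,
        ∀ h : H, projPGL2 (s h) = (h : PGL2) := by
  rintro ⟨s, hs⟩
  obtain ⟨e⟩ := hH
  set k : ZMod n := ((n / 2 : ℕ) : ZMod n) with hk
  obtain ⟨m, hm⟩ := hn
  have hk0 : k ≠ 0 := by
    intro h
    rw [hk, ZMod.natCast_eq_zero_iff] at h
    rcases Nat.eq_zero_or_pos (n / 2) with h' | h'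
    · omega
    · have := Nat.le_of_dvd h' h
      omega
  have hkk : k + k = 0 := by
    rw [hk, ← Nat.cast_add]
    have : n / 2 + n / 2 = n := by omega
    rw [this, ZMod.natCast_self]
  -- the three nontrivial elements of the Klein four-subgroup
  set a : H := e.symm (DihedralGroup.r k) with ha
  set b : H := e.symm (DihedralGroup.sr 0) with hb
  have hab : a * b = e.symm (DihedralGroup.sr (-k)) := by
    rw [ha, hb, ← map_mul, DihedralGroup.r_mul_sr, zero_sub]
  -- non-identity facts
  have key : ∀ x : H, x ≠ 1 → s x ∉ Subgroup.center (Matrix.GeneralLinearGroup (Fin 2) ℂ) := by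
    intro x hx hmem
    have : projPGL2 (s x) = 1 := (QuotientGroup.eq_one_iff _).mpr hmem
    rw [hs x] at this
    exact hx (by exact_mod_cast this)
  have hane : a ≠ 1 := by
    rw [ha, ← map_one e.symm]
    intro h
    have := e.symm.injective h
    simp only [DihedralGroup.one_def] at this
    exact hk0 (by injection this)
  have hbne : b ≠ 1 := by
    rw [hb, ← map_one e.symm]
    intro h
    have := e.symm.injective h
    simp only [DihedralGroup.one_def] at this
    cases this
  have habne : a * b ≠ 1 := by
    rw [hab, ← map_one e.symm]
    intro h
    have := e.symm.injective h
    simp only [DihedralGroup.one_def] at this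
    cases this
  -- squares are one
  have ha2 : s a * s a = 1 := by
    rw [← map_mul, ha, ← map_mul, DihedralGroup.r_mul_r, hkk, ← DihedralGroup.one_def,
      map_one, map_one]
  have hb2 : s b * s b = 1 := by
    rw [← map_mul, hb, ← map_mul, DihedralGroup.sr_mul_sr, sub_self, ← DihedralGroup.one_def,
      map_one, map_one]
  have hab2 : s (a * b) * s (a * b) = 1 := by
    rw [← map_mul, hab, ← map_mul, DihedralGroup.sr_mul_sr, sub_self, ← DihedralGroup.one_def,
      map_one, map_one]
  -- determinants
  have dA := gl_det_neg_one ha2 (key a hane)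
  have dB := gl_det_neg_one hb2 (key b hbne)
  have dAB := gl_det_neg_one hab2 (key (a * b) habne)
  rw [map_mul] at dAB
  have : ((s a * s b : Matrix.GeneralLinearGroup (Fin 2) ℂ) : Matrix (Fin 2) (Fin 2) ℂ).det
      = (-1 : ℂ) * (-1 : ℂ) := by
    rw [Units.val_mul, Matrix.det_mul, dA, dB]
  rw [dAB] at this
  norm_num at this
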